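/- Let x₁, x₂ ∈ ℍ be quaternions such that x̄₁x₂ = s − t·i for some real numbers s and t with t ≥ 0 (i.e., the j- and k-components of x̄₁x₂ vanish, s is its real part, and −t is its i-component). Then t ≤ (N(x₁)+N(x₂))/2; moreover, if t = (N(x₁)+N(x₂))/2 then x₂ = −x₁·i (quaternion product). -/

import Mathlib

noncomputable section

/-- Reduced norm `N(x) = x·x̄`. -/
def qN (x : Quaternion ℝ) : ℝ := x.re ^ 2 + x.imI ^ 2 + x.imJ ^ 2 + x.imK ^ 2

/-- The quaternion unit `i`. -/
def qi : Quaternion ℝ := ⟨0, 1, 0, 0⟩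

/-- if `x̄₁x₂ = s − t·i` with s, t real and t ≥ 0, then
`t ≤ (N(x₁)+N(x₂))/2`, with equality only when `x₂ = −x₁·i`. -/
theorem stmt4 (x₁ x₂ : Quaternion ℝ) (s t : ℝ) (ht : 0 ≤ t)
    (h : star x₁ * x₂ = (⟨s, -t, 0, 0⟩ : Quaternion ℝ)) :
    t ≤ (qN x₁ + qN x₂) / 2 ∧
      (t = (qN x₁ + qN x₂) / 2 → x₂ = -(x₁ * qi)) := by
  have h := Quaternion.ext_iff.mp h
  simp only [Quaternion.re_mul, Quaternion.imI_mul, Quaternion.imJ_mul,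
    Quaternion.imK_mul, Quaternion.re_star, Quaternion.imI_star,
    Quaternion.imJ_star, Quaternion.imK_star] at h
  obtain ⟨h0, h1, h2, h3⟩ := h
  simp only [qN, Quaternion.ext_iff, Quaternion.re_mul, Quaternion.imI_mul,
    Quaternion.imJ_mul, Quaternion.imK_mul, Quaternion.re_neg, Quaternion.imI_neg,
    Quaternion.imJ_neg, Quaternion.imK_neg]
  obtain ⟨a0, a1, a2, a3⟩ := x₁
  obtain ⟨b0, b1, b2, b3⟩ := x₂
  dsimp only [qi] at h0 h1 h2 h3 ⊢
  constructor
  · nlinarith [sq_nonneg (b0 - a1), sq_nonneg (b1 + a0), sq_nonneg (b2 + a3),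
      sq_nonneg (b3 - a2)]
  · intro heq
    have key : (b0 - a1) ^ 2 + (b1 + a0) ^ 2 + (b2 + a3) ^ 2 + (b3 - a2) ^ 2 = 0 := by
      nlinarith
    have s0 := sq_nonneg (b0 - a1)
    have s1 := sq_nonneg (b1 + a0)
    have s2 := sq_nonneg (b2 + a3)
    have s3 := sq_nonneg (b3 - a2)
    have k0 : b0 - a1 = 0 := by
      have : (b0 - a1) ^ 2 = 0 := by linarith
      exact pow_eq_zero_iff two_ne_zero |>.mp this
    have k1 : b1 + a0 = 0 := by
      have : (b1 + a0) ^ 2 = 0 := by linarith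
      exact pow_eq_zero_iff two_ne_zero |>.mp this
    have k2 : b2 + a3 = 0 := by
      have : (b2 + a3) ^ 2 = 0 := by linarith
      exact pow_eq_zero_iff two_ne_zero |>.mp this
    have k3 : b3 - a2 = 0 := by
      have : (b3 - a2) ^ 2 = 0 := by linarith
      exact pow_eq_zero_iff two_ne_zero |>.mp this
    refine ⟨by linarith, by linarith, by linarith, by linarith⟩
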